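/- Let μ be a regular uncountable cardinal, C a class of <μ-presented R-modules, and M a μ-generated R-module. If M is C-filtered, then M admits a C-filtration of ordinal length at most μ all of whose entries are <μ-generated submodules. -/

import Mathlib

universe u v

open Cardinal

variable (R : Type u) [Ring R]

/-- The quotient `N'/N` of two submodules of a module, presented as the quotient of `N'`
by the trace of `N` on `N'`. -/
abbrev SubQuot {M : Type v} [AddCommGroup M] [Module R M] (N N' : Submodule R M) : Type v :=
  N' ⧸ N.comap N'.subtype

/-- `F` is a `C`-filtration of `M` of length `η`: an increasing continuous chain of
submodules starting at `⊥` and ending (at stage `η`) at `⊤`, all of whose consecutive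
quotients are isomorphic to members of `C`. -/
structure IsCFiltration (C : Set (ModuleCat.{v} R)) {M : Type v} [AddCommGroup M]
    [Module R M] (η : Ordinal.{v}) (F : Ordinal.{v} → Submodule R M) : Prop where
  bot : F 0 = ⊥
  top : F η = ⊤
  mono : ∀ i j : Ordinal.{v}, i ≤ j → j ≤ η → F i ≤ F j
  continuous : ∀ i : Ordinal.{v}, i ≤ η → Order.IsSuccLimit i →
    F i = ⨆ j : {j : Ordinal.{v} // j < i}, F j.1
  quot : ∀ i : Ordinal.{v}, i + 1 ≤ η →
    ∃ P ∈ C, Nonempty ((SubQuot R (F i) (F (i + 1))) ≃ₗ[R] P)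

/-- A module is `C`-filtered if it admits a `C`-filtration. -/
def IsCFiltered (C : Set (ModuleCat.{v} R)) (M : Type v) [AddCommGroup M]
    [Module R M] : Prop :=
  ∃ (η : Ordinal.{v}) (F : Ordinal.{v} → Submodule R M), IsCFiltration R C η F

/-- A module is `C`-filtered via a filtration of length `< μ`. -/
def IsCFilteredLt (C : Set (ModuleCat.{v} R)) (μ : Cardinal.{v}) (M : Type v)
    [AddCommGroup M] [Module R M] : Prop :=
  ∃ η : Ordinal.{v}, η < μ.ord ∧ ∃ F : Ordinal.{v} → Submodule R M, IsCFiltration R C η F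

/-- A module is `<μ`-presented: it has `<μ` many generators and `<μ` many relations. -/
def LtPresented (μ : Cardinal.{v}) (N : Type v) [AddCommGroup N] [Module R N] : Prop :=
  ∃ s : Set N, #s < μ ∧ Submodule.span R s = ⊤ ∧
    ∃ t : Set (s →₀ R), #t < Cardinal.lift.{u} μ ∧
      Submodule.span R t =
        LinearMap.ker (Finsupp.linearCombination R ((↑) : s → N))

/-- `P_μ(X)`: the subsets of `X` of size `< μ`. -/
def PMu (μ : Cardinal.{v}) (X : Type v) : Set (Set X) := {z | #z < μ}

/-- `D` is club in `P_μ(X)`: it consists of `<μ`-sized sets, is `⊆`-cofinal, and is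
closed under unions of `⊆`-increasing chains of length `< μ`. -/
def IsClubIn (μ : Cardinal.{v}) {X : Type v} (D : Set (Set X)) : Prop :=
  D ⊆ PMu μ X ∧
  (∀ z : Set X, #z < μ → ∃ d ∈ D, z ⊆ d) ∧
  (∀ (ι : Type v) [LinearOrder ι] [Nonempty ι], #ι < μ →
    ∀ c : ι → Set X, (∀ i j : ι, i ≤ j → c i ⊆ c j) → (∀ i, c i ∈ D) → (⋃ i, c i) ∈ D)

/-- `S` is stationary in `P_μ(X)`: it meets every club. -/
def IsStationaryIn (μ : Cardinal.{v}) {X : Type v} (S : Set (Set X)) : Prop :=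
  ∀ D : Set (Set X), IsClubIn μ D → (S ∩ D).Nonempty


universe w

section HillAux

variable {M : Type v} [AddCommGroup M] [Module R M]

/-- Span of a union of blocks of generators. -/
noncomputable def MU {ι : Type w} (A : ι → Set M) (V : Set ι) : Submodule R M :=
  Submodule.span R (⋃ i ∈ V, A i)

variable {ι : Type w} {A : ι → Set M} {V W : Set ι}

lemma MU_mono (h : V ⊆ W) : MU R A V ≤ MU R A W :=
  Submodule.span_mono (Set.biUnion_subset_biUnion_left h)

lemma MU_empty : MU R A (∅ : Set ι) = ⊥ := by
  simp [MU]

lemma span_le_MU {i : ι} (h : i ∈ V) : Submodule.span R (A i) ≤ MU R A V :=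
  Submodule.span_mono (Set.subset_biUnion_of_mem h)

lemma MU_le {N : Submodule R M} (h : ∀ i ∈ V, Submodule.span R (A i) ≤ N) :
    MU R A V ≤ N := by
  rw [MU, Submodule.span_le]
  exact Set.iUnion₂_subset fun i hi => (Submodule.span_le.1 (h i hi))

lemma MU_insert {i : ι} : MU R A (insert i V) = Submodule.span R (A i) ⊔ MU R A V := by
  rw [MU, Set.biUnion_insert, Submodule.span_union, MU]

lemma mem_MU_finset {x : M} (hx : x ∈ MU R A V) :
    ∃ s : Finset ι, ↑s ⊆ V ∧ x ∈ MU R A ↑s := by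
  obtain ⟨t, htsub, htx⟩ := Submodule.mem_span_finite_of_mem_span hx
  choose f hfV hfA using fun (y : M) (hy : y ∈ (t : Set M)) =>
    Set.mem_iUnion₂.1 (htsub hy)
  classical
  refine ⟨t.attach.image fun y => f y.1 y.2, ?_, ?_⟩
  · intro j hj
    simp only [Finset.coe_image, Set.mem_image, Finset.mem_coe, Finset.mem_attach] at hj
    obtain ⟨y, -, rfl⟩ := hj
    exact hfV _ _
  · refine Submodule.span_le.2 ?_ htx
    intro y hy
    refine Submodule.subset_span (Set.mem_iUnion₂.2 ⟨f y hy, ?_, hfA y hy⟩)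
    simp only [Finset.coe_image, Set.mem_image, Finset.mem_coe, Finset.mem_attach]
    exact ⟨⟨y, hy⟩, trivial, rfl⟩

end HillAux

section RK

/-- The ordinal rank of an element of `η.ToType`. -/
noncomputable def rkf (η : Ordinal.{v}) (i : η.ToType) : Ordinal.{v} :=
  ((Ordinal.ToType.mk (o := η)).symm i).1

lemma rkf_lt {η : Ordinal.{v}} (i : η.ToType) : rkf η i < η :=
  ((Ordinal.ToType.mk (o := η)).symm i).2

lemma rkf_lt_iff {η : Ordinal.{v}} {i j : η.ToType} : rkf η i < rkf η j ↔ i < j := by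
  rw [show rkf η i < rkf η j ↔ (Ordinal.ToType.mk (o := η)).symm i < (Ordinal.ToType.mk (o := η)).symm j
    from Iff.rfl]
  exact (Ordinal.ToType.mk (o := η)).symm.lt_iff_lt

lemma rkf_le_iff {η : Ordinal.{v}} {i j : η.ToType} : rkf η i ≤ rkf η j ↔ i ≤ j := by
  rw [show rkf η i ≤ rkf η j ↔ (Ordinal.ToType.mk (o := η)).symm i ≤ (Ordinal.ToType.mk (o := η)).symm j
    from Iff.rfl]
  exact (Ordinal.ToType.mk (o := η)).symm.le_iff_le

lemma rkf_inj {η : Ordinal.{v}} {i j : η.ToType} (h : rkf η i = rkf η j) : i = j := by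
  apply (Ordinal.ToType.mk (o := η)).symm.injective
  exact Subtype.coe_injective h

lemma rkf_surj {η : Ordinal.{v}} {o : Ordinal.{v}} (ho : o < η) : ∃ i, rkf η i = o :=
  ⟨Ordinal.ToType.mk (o := η) ⟨o, ho⟩, by simp [rkf]⟩

lemma rkf_succ_le {η : Ordinal.{v}} (i : η.ToType) : rkf η i + 1 ≤ η := by
  rw [Ordinal.add_one_eq_succ, Order.succ_le_iff]
  exact rkf_lt i

end RK

section Hill

variable {R}
variable {M : Type v} [AddCommGroup M] [Module R M]
variable {η : Ordinal.{v}} {F : Ordinal.{v} → Submodule R M} {A B : η.ToType → Set M}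
variable {Deps : η.ToType → Set η.ToType}

lemma spanA_le_F (hFA : ∀ i, F (rkf η i + 1) = Submodule.span R (A i) ⊔ F (rkf η i))
    (i : η.ToType) : Submodule.span R (A i) ≤ F (rkf η i + 1) := by
  rw [hFA i]; exact le_sup_left

lemma spanA_le_F_of_lt (hmono : ∀ i j : Ordinal.{v}, i ≤ j → j ≤ η → F i ≤ F j)
    (hFA : ∀ i, F (rkf η i + 1) = Submodule.span R (A i) ⊔ F (rkf η i))
    {i : η.ToType} {γ : Ordinal.{v}} (h : rkf η i < γ) (hγ : γ ≤ η) :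
    Submodule.span R (A i) ≤ F γ := by
  refine (spanA_le_F hFA i).trans (hmono _ _ ?_ hγ)
  rwa [Ordinal.add_one_eq_succ, Order.succ_le_iff]

lemma F_eq_MU (hbot : F 0 = ⊥)
    (hmono : ∀ i j : Ordinal.{v}, i ≤ j → j ≤ η → F i ≤ F j)
    (hcont : ∀ i : Ordinal.{v}, i ≤ η → Order.IsSuccLimit i →
      F i = ⨆ j : {j : Ordinal.{v} // j < i}, F j.1)
    (hFA : ∀ i, F (rkf η i + 1) = Submodule.span R (A i) ⊔ F (rkf η i)) :
    ∀ γ : Ordinal.{v}, γ ≤ η → F γ = MU R A {i | rkf η i < γ} := by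
  intro γ
  induction γ using Ordinal.induction with
  | _ γ IH =>
  intro hγ
  rcases Ordinal.zero_or_succ_or_isSuccLimit γ with h0 | ⟨δ, hsucc⟩ | hlim
  · subst h0
    have : {i : η.ToType | rkf η i < 0} = ∅ := by
      ext i; simp
    rw [hbot, this, MU_empty]
  · rw [← Ordinal.add_one_eq_succ] at hsucc
    subst hsucc
    have hδ : δ < η := lt_of_lt_of_le (by rw [Ordinal.add_one_eq_succ]; exact Order.lt_succ δ) hγ
    obtain ⟨i₀, hi₀⟩ := rkf_surj hδ
    have hset : {i : η.ToType | rkf η i < δ + 1} = insert i₀ {i | rkf η i < δ} := by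
      ext i
      simp only [Set.mem_setOf_eq, Set.mem_insert_iff, Ordinal.add_one_eq_succ,
        Order.lt_succ_iff]
      constructor
      · intro h
        rcases lt_or_eq_of_le h with h | h
        · exact Or.inr h
        · exact Or.inl (rkf_inj (h.trans hi₀.symm))
      · rintro (rfl | h)
        · exact le_of_eq hi₀
        · exact h.le
    rw [hset, MU_insert, ← IH δ (by rw [Ordinal.add_one_eq_succ]; exact Order.lt_succ δ)
      (le_trans (by rw [Ordinal.add_one_eq_succ]; exact (Order.lt_succ δ).le) hγ)]
    rw [← hi₀]
    exact hFA i₀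
  · apply le_antisymm
    · rw [hcont γ hγ hlim]
      apply iSup_le
      rintro ⟨j, hj⟩
      rw [IH j hj (hj.le.trans hγ)]
      exact MU_mono R (fun i (hi : rkf η i < j) => lt_trans hi hj)
    · apply MU_le
      intro i (hi : rkf η i < γ)
      exact spanA_le_F_of_lt hmono hFA hi hγ

lemma key_succ
    (hmono : ∀ i j : Ordinal.{v}, i ≤ j → j ≤ η → F i ≤ F j)
    (hFA : ∀ i, F (rkf η i + 1) = Submodule.span R (A i) ⊔ F (rkf η i))
    (hAB : ∀ i, Submodule.span R (A i) ⊓ F (rkf η i) ≤ Submodule.span R (B i))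
    (hDspan : ∀ i, B i ⊆ (MU R A (Deps i) : Set M))
    (hDlt : ∀ i j, j ∈ Deps i → j < i)
    {U : Set η.ToType} (hU : ∀ i ∈ U, Deps i ⊆ U)
    {δ : Ordinal.{v}} (hδ : δ + 1 ≤ η) :
    ∀ β : Ordinal.{v}, ∀ x : M, x ∈ MU R A (U ∩ {i | rkf η i < β}) → x ∈ F (δ + 1) →
      x ∈ MU R A (U ∩ {i | rkf η i < δ + 1}) := by
  intro β
  induction β using Ordinal.induction with
  | _ β IH =>
  intro x hx hxF
  obtain ⟨s, hsub, hxs⟩ := mem_MU_finset R hx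
  rcases s.eq_empty_or_nonempty with rfl | hne
  · have : x ∈ (⊥ : Submodule R M) := by
      have h0 : ((∅ : Finset η.ToType) : Set η.ToType) = (∅ : Set η.ToType) := by simp
      rw [h0, MU_empty] at hxs
      exact hxs
    rw [Submodule.mem_bot] at this
    rw [this]
    exact Submodule.zero_mem _
  · set m := s.max' hne with hm
    have hmmem : m ∈ s := s.max'_mem hne
    have hmU : m ∈ U := (hsub hmmem).1
    have hmβ : rkf η m < β := (hsub hmmem).2
    by_cases hcase : rkf η m < δ + 1
    · refine MU_mono R ?_ hxs
      intro j hj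
      refine ⟨(hsub hj).1, show rkf η j < δ + 1 from lt_of_le_of_lt ?_ hcase⟩
      exact rkf_le_iff.2 (Finset.le_max' s j hj)
    · push_neg at hcase
      have hsplit : MU R A (↑s : Set η.ToType)
          = Submodule.span R (A m) ⊔ MU R A (↑(s.erase m) : Set η.ToType) := by
        rw [← MU_insert]
        congr 1
        rw [← Finset.coe_insert, Finset.insert_erase hmmem]
      rw [hsplit] at hxs
      obtain ⟨aa, haa, y, hy, hxy⟩ := Submodule.mem_sup.1 hxs
      have herase_lt : ∀ j ∈ s.erase m, j < m := by
        intro j hj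
        exact lt_of_le_of_ne (Finset.le_max' s j (Finset.mem_of_mem_erase hj))
          (Finset.ne_of_mem_erase hj)
      have hmη : rkf η m ≤ η := (rkf_lt m).le
      have hyF : y ∈ F (rkf η m) := by
        refine MU_le R ?_ hy
        intro j hj
        exact spanA_le_F_of_lt hmono hFA (rkf_lt_iff.2 (herase_lt j hj)) hmη
      have hxFm : x ∈ F (rkf η m) := hmono _ _ hcase hmη hxF
      have haaF : aa ∈ F (rkf η m) := by
        have : aa = x - y := by rw [← hxy]; abel
        rw [this]
        exact Submodule.sub_mem _ hxFm hyF
      have haaB : aa ∈ Submodule.span R (B m) := hAB m (Submodule.mem_inf.2 ⟨haa, haaF⟩)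
      have hDepsub : Deps m ⊆ U ∩ {i | rkf η i < rkf η m} := fun j hj =>
        ⟨hU m hmU hj, rkf_lt_iff.2 (hDlt m j hj)⟩
      have haaMU : aa ∈ MU R A (U ∩ {i | rkf η i < rkf η m}) := by
        have h1 : Submodule.span R (B m) ≤ MU R A (Deps m) :=
          Submodule.span_le.2 (hDspan m)
        exact MU_mono R hDepsub (h1 haaB)
      have hyMU : y ∈ MU R A (U ∩ {i | rkf η i < rkf η m}) := by
        refine MU_mono R ?_ hy
        intro j hj
        exact ⟨(hsub (Finset.mem_of_mem_erase hj)).1, rkf_lt_iff.2 (herase_lt j hj)⟩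
      have hxMU : x ∈ MU R A (U ∩ {i | rkf η i < rkf η m}) := by
        rw [← hxy]
        exact Submodule.add_mem _ haaMU hyMU
      exact IH (rkf η m) hmβ x hxMU hxF

lemma key (hbot : F 0 = ⊥)
    (hmono : ∀ i j : Ordinal.{v}, i ≤ j → j ≤ η → F i ≤ F j)
    (hcont : ∀ i : Ordinal.{v}, i ≤ η → Order.IsSuccLimit i →
      F i = ⨆ j : {j : Ordinal.{v} // j < i}, F j.1)
    (hFA : ∀ i, F (rkf η i + 1) = Submodule.span R (A i) ⊔ F (rkf η i))
    (hAB : ∀ i, Submodule.span R (A i) ⊓ F (rkf η i) ≤ Submodule.span R (B i))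
    (hDspan : ∀ i, B i ⊆ (MU R A (Deps i) : Set M))
    (hDlt : ∀ i j, j ∈ Deps i → j < i)
    {U : Set η.ToType} (hU : ∀ i ∈ U, Deps i ⊆ U) :
    ∀ γ : Ordinal.{v}, γ ≤ η → ∀ x : M, x ∈ MU R A U → x ∈ F γ →
      x ∈ MU R A (U ∩ {i | rkf η i < γ}) := by
  intro γ
  induction γ using Ordinal.induction with
  | _ γ IH =>
  intro hγ x hxU hxF
  rcases Ordinal.zero_or_succ_or_isSuccLimit γ with h0 | ⟨δ, hsucc⟩ | hlim
  · subst h0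
    rw [hbot, Submodule.mem_bot] at hxF
    rw [hxF]
    exact Submodule.zero_mem _
  · rw [← Ordinal.add_one_eq_succ] at hsucc
    subst hsucc
    have hUeq : U ∩ {i | rkf η i < η} = U := by
      apply Set.inter_eq_self_of_subset_left
      intro i _
      exact rkf_lt i
    refine key_succ hmono hFA hAB hDspan hDlt hU hγ η x ?_ hxF
    rw [hUeq]
    exact hxU
  · rw [hcont γ hγ hlim] at hxF
    haveI : Nonempty {j : Ordinal.{v} // j < γ} := ⟨⟨0, hlim.pos⟩⟩
    have hdir : Directed (· ≤ ·) (fun j : {j : Ordinal.{v} // j < γ} => F j.1) := by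
      intro j₁ j₂
      rcases le_total j₁.1 j₂.1 with h | h
      · exact ⟨j₂, hmono _ _ h (j₂.2.le.trans hγ), le_rfl⟩
      · exact ⟨j₁, le_rfl, hmono _ _ h (j₁.2.le.trans hγ)⟩
    obtain ⟨j, hj⟩ := (Submodule.mem_iSup_of_directed _ hdir).1 hxF
    refine MU_mono R (Set.inter_subset_inter_right _ ?_) (IH j.1 j.2 (j.2.le.trans hγ) x hxU hj)
    intro i (hi : rkf η i < j.1)
    exact lt_trans hi j.2

end Hill


section SecondIso

variable {M : Type v} [AddCommGroup M] [Module R M]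

/-- The second isomorphism theorem, stated for `SubQuot`. -/
noncomputable def subQuotEquiv (N N' q : Submodule R M) (h : N' = q ⊔ N) :
    ((q : Submodule R M) ⧸ Submodule.comap q.subtype (q ⊓ N)) ≃ₗ[R]
      (N' ⧸ Submodule.comap N'.subtype N) := by
  subst h
  exact LinearMap.quotientInfEquivSupQuotient q N

end SecondIso

/-- Transfinite iteration of a `step` operation on sets. -/
noncomputable def iterU {X : Type v} (step : Set X → Set X) (ξ : Ordinal.{w}) : Set X :=
  ⋃ ζ : Set.Iio ξ, step (iterU step ζ.1)
  termination_by ξ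
  decreasing_by exact ζ.2

lemma iterU_def {X : Type v} (step : Set X → Set X) (ξ : Ordinal.{w}) :
    iterU step ξ = ⋃ ζ : Set.Iio ξ, step (iterU step ζ.1) := by
  rw [iterU]

lemma step_iterU_subset {X : Type v} (step : Set X → Set X) {ζ ξ : Ordinal.{w}} (h : ζ < ξ) :
    step (iterU step ζ) ⊆ iterU step ξ := by
  rw [iterU_def step ξ]
  exact Set.subset_iUnion (fun ζ' : Set.Iio ξ => step (iterU step ζ'.1)) ⟨ζ, h⟩

lemma iterU_mono {X : Type v} (step : Set X → Set X) {ζ ξ : Ordinal.{w}} (h : ζ ≤ ξ) :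
    iterU step ζ ⊆ iterU step ξ := by
  rw [iterU_def step ζ]
  exact Set.iUnion_subset fun ζ' => step_iterU_subset step (lt_of_lt_of_le ζ'.2 h)

lemma iterU_zero {X : Type v} (step : Set X → Set X) : iterU step (0 : Ordinal.{w}) = ∅ := by
  rw [iterU_def]
  haveI : IsEmpty (Set.Iio (0 : Ordinal.{w})) :=
    ⟨fun ζ => not_lt_zero (a := ζ.1) ζ.2⟩
  exact Set.iUnion_of_empty _

lemma iterU_succ {X : Type v} (step : Set X → Set X) (hstep : ∀ V, V ⊆ step V)
    (ξ : Ordinal.{w}) : iterU step (ξ + 1) = step (iterU step ξ) := by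
  apply Set.Subset.antisymm
  · rw [iterU_def step (ξ + 1)]
    apply Set.iUnion_subset
    rintro ⟨ζ, hζ⟩
    have hζ' : ζ ≤ ξ := by
      have := hζ; simp only [Set.mem_Iio] at this
      exact Order.lt_succ_iff.1 (by rw [← Ordinal.add_one_eq_succ]; exact this)
    rcases lt_or_eq_of_le hζ' with h | h
    · exact (step_iterU_subset step h).trans (hstep _)
    · simp only [h]; exact subset_rfl
  · exact step_iterU_subset step (Order.lt_succ ξ)

lemma iterU_limit {X : Type v} (step : Set X → Set X) {ξ : Ordinal.{w}} (hξ : Order.IsSuccLimit ξ) :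
    iterU step ξ = ⋃ ζ : Set.Iio ξ, iterU step ζ.1 := by
  apply Set.Subset.antisymm
  · rw [iterU_def step ξ]
    apply Set.iUnion_subset
    rintro ⟨ζ, hζ⟩
    have h1 : ζ + 1 < ξ := hξ.succ_lt hζ
    exact (step_iterU_subset step (Order.lt_succ ζ)).trans
      (Set.subset_iUnion (fun ζ' : Set.Iio ξ => iterU step ζ'.1) ⟨ζ + 1, h1⟩)
  · exact Set.iUnion_subset fun ζ' => iterU_mono step ζ'.2.le


section ExAB

variable {R}

lemma exists_A_B {M : Type v} [AddCommGroup M] [Module R M]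
    {μ : Cardinal.{v}} {N N' : Submodule R M} (hle : N ≤ N')
    {P : Type v} [AddCommGroup P] [Module R P] (hP : LtPresented R μ P)
    (e : (SubQuot R N N') ≃ₗ[R] P) :
    ∃ A B : Set M, #A < μ ∧ #B < μ ∧ N' = Submodule.span R A ⊔ N ∧
      (B ⊆ (N : Set M)) ∧ B ⊆ (Submodule.span R A : Set M) ∧
      Submodule.span R A ⊓ N ≤ Submodule.span R B := by
  classical
  obtain ⟨s, hs, hsspan, t, ht, htker⟩ := hP
  set K := N.comap N'.subtype with hK
  have hsurj : Function.Surjective K.mkQ := Submodule.mkQ_surjective K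
  choose c hc using fun p : s => hsurj (e.symm p.1)
  let a : s → M := fun p => (c p : M)
  have haN' : ∀ p, a p ∈ N' := fun p => (c p).2
  -- key identities
  have hmk : ∀ σ : s →₀ R, K.mkQ (Finsupp.linearCombination R c σ)
      = e.symm (Finsupp.linearCombination R (Subtype.val : s → P) σ) := by
    intro σ
    have h1 := Finsupp.apply_linearCombination R K.mkQ c σ
    have h2 := Finsupp.apply_linearCombination R (e.symm : P →ₗ[R] SubQuot R N N')
      (Subtype.val : s → P) σ
    rw [h1]
    have h3 : (⇑K.mkQ ∘ c)
        = ⇑(e.symm : P →ₗ[R] SubQuot R N N') ∘ (Subtype.val : s → P) := by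
      funext p
      simpa using hc p
    rw [h3, ← h2]
    simp
  have hval : ∀ σ : s →₀ R, ((Finsupp.linearCombination R c σ : N') : M)
      = Finsupp.linearCombination R a σ := by
    intro σ
    rw [show ((Finsupp.linearCombination R c σ : N') : M)
        = N'.subtype (Finsupp.linearCombination R c σ) from rfl,
      Finsupp.apply_linearCombination R N'.subtype c σ]
    rfl
  have hlinmem : ∀ σ : s →₀ R,
      Finsupp.linearCombination R a σ ∈ Submodule.span R (Set.range a) := by
    intro σ
    rw [← Finsupp.range_linearCombination]
    exact LinearMap.mem_range_self _ σ
  -- membership of combinations with zero image in N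
  have hzero : ∀ σ : s →₀ R, Finsupp.linearCombination R (Subtype.val : s → P) σ = 0 →
      Finsupp.linearCombination R a σ ∈ N := by
    intro σ h0
    have : K.mkQ (Finsupp.linearCombination R c σ) = 0 := by
      rw [hmk, h0, map_zero]
    have hKmem : Finsupp.linearCombination R c σ ∈ K := by
      rwa [Submodule.mkQ_apply, Submodule.Quotient.mk_eq_zero] at this
    have := Submodule.mem_comap.1 hKmem
    rwa [show N'.subtype (Finsupp.linearCombination R c σ)
        = Finsupp.linearCombination R a σ from hval σ] at this
  refine ⟨Set.range a, (Finsupp.linearCombination R a) '' t, ?_, ?_, ?_, ?_, ?_, ?_⟩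
  · exact Cardinal.mk_range_le.trans_lt hs
  · have h1 : Cardinal.lift.{max u v} #((Finsupp.linearCombination R a) '' t)
        ≤ Cardinal.lift.{v} #t := Cardinal.mk_image_le_lift
    have h2 : Cardinal.lift.{v} #t < Cardinal.lift.{v} (Cardinal.lift.{u} μ) :=
      Cardinal.lift_lt.2 ht
    rw [Cardinal.lift_lift] at h2
    exact Cardinal.lift_lt.1 (h1.trans_lt h2)
  · apply le_antisymm
    · intro m hm
      have hx : e (K.mkQ ⟨m, hm⟩) ∈ Submodule.span R s := by rw [hsspan]; trivial
      obtain ⟨σ, hσ⟩ := (Finsupp.mem_span_iff_linearCombination R s _).1 hx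
      have hqeq : K.mkQ ⟨m, hm⟩ = K.mkQ (Finsupp.linearCombination R c σ) := by
        rw [hmk, hσ, LinearEquiv.symm_apply_apply]
      have hsub : (⟨m, hm⟩ : N') - Finsupp.linearCombination R c σ ∈ K := by
        rw [Submodule.mkQ_apply, Submodule.mkQ_apply] at hqeq
        exact (Submodule.Quotient.eq K).1 hqeq
      have hsub' : m - Finsupp.linearCombination R a σ ∈ N := by
        have := Submodule.mem_comap.1 hsub
        simpa [hval σ] using this
      have : m = Finsupp.linearCombination R a σ + (m - Finsupp.linearCombination R a σ) := by
        abel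
      rw [this]
      exact Submodule.add_mem_sup (hlinmem σ) hsub'
    · refine sup_le ?_ hle
      rw [Submodule.span_le]
      rintro _ ⟨p, rfl⟩
      exact haN' p
  · rintro _ ⟨σ, hσt, rfl⟩
    have h0 : Finsupp.linearCombination R (Subtype.val : s → P) σ = 0 := by
      have : σ ∈ LinearMap.ker (Finsupp.linearCombination R ((↑) : s → P)) := by
        rw [← htker]; exact Submodule.subset_span hσt
      exact LinearMap.mem_ker.1 this
    exact hzero σ h0
  · rintro _ ⟨σ, hσt, rfl⟩
    exact hlinmem σ
  · rintro x ⟨hxA, hxN⟩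
    obtain ⟨σ, hσ⟩ := Finsupp.mem_span_range_iff_exists_finsupp.1 hxA
    have hxeq : Finsupp.linearCombination R a σ = x := by
      rw [Finsupp.linearCombination_apply]; exact hσ
    have hKmem : Finsupp.linearCombination R c σ ∈ K := by
      rw [hK, Submodule.mem_comap, show N'.subtype (Finsupp.linearCombination R c σ)
        = Finsupp.linearCombination R a σ from hval σ, hxeq]
      exact hxN
    have h0 : Finsupp.linearCombination R (Subtype.val : s → P) σ = 0 := by
      have : K.mkQ (Finsupp.linearCombination R c σ) = 0 := by
        rw [Submodule.mkQ_apply, Submodule.Quotient.mk_eq_zero]; exact hKmem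
      rw [hmk] at this
      exact (LinearEquiv.map_eq_zero_iff e.symm).1 this
    have hσker : σ ∈ Submodule.span R t := by
      rw [htker]; exact LinearMap.mem_ker.2 h0
    have : x ∈ Submodule.map (Finsupp.linearCombination R a) (Submodule.span R t) := by
      rw [← hxeq]
      exact Submodule.mem_map_of_mem hσker
    rwa [Submodule.map_span] at this


end ExAB

/-- If `μ` is regular uncountable, `C` a class of `<μ`-presented modules,
and `M` is a `μ`-generated `C`-filtered module, then `M` admits a `C`-filtration of
length at most `μ` all of whose (proper) entries are `<μ`-generated. -/
theorem cFiltration_of_length_mu (μ : Cardinal.{v}) (hreg : μ.IsRegular) (hunc : ℵ₀ < μ)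
    (C : Set (ModuleCat.{v} R)) (hC : ∀ P ∈ C, LtPresented R μ P)
    (M : Type v) [AddCommGroup M] [Module R M]
    (hgen : ∃ s : Set M, #s ≤ μ ∧ Submodule.span R s = ⊤)
    (hM : IsCFiltered R C M) :
    ∃ (η : Ordinal.{v}) (F : Ordinal.{v} → Submodule R M),
      η ≤ μ.ord ∧ IsCFiltration R C η F ∧
      ∀ i : Ordinal.{v}, i < η → ∃ s : Set M, #s < μ ∧ Submodule.span R s = F i := by
  classical
  obtain ⟨sM, hsMcard, hsMspan⟩ := hgen
  obtain ⟨η, F, hF⟩ := hM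
  -- Step 1: choose generators and relations for each successor quotient
  have hdata : ∀ i : η.ToType, ∃ Ai Bi : Set M, #Ai < μ ∧ #Bi < μ ∧
      F (rkf η i + 1) = Submodule.span R Ai ⊔ F (rkf η i) ∧
      (Bi ⊆ (F (rkf η i) : Set M)) ∧ Bi ⊆ (Submodule.span R Ai : Set M) ∧
      Submodule.span R Ai ⊓ F (rkf η i) ≤ Submodule.span R Bi := by
    intro i
    have hle : F (rkf η i) ≤ F (rkf η i + 1) :=
      hF.mono _ _ le_self_add (rkf_succ_le i)
    obtain ⟨P, hPC, ⟨ψ⟩⟩ := hF.quot (rkf η i) (rkf_succ_le i)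
    exact exists_A_B hle (hC P hPC) ψ
  choose A B hAcard hBcard hFA hBF hBA hAB using hdata
  -- Step 2: dependency sets
  have hdeps : ∀ i : η.ToType, ∃ D : Set η.ToType, #D < μ ∧ (∀ j ∈ D, j < i) ∧
      ∀ b ∈ B i, b ∈ MU R A D := by
    intro i
    have hBi : ∀ b ∈ B i, b ∈ MU R A {j | rkf η j < rkf η i} := by
      intro b hb
      have hmem : b ∈ F (rkf η i) := hBF i hb
      rwa [F_eq_MU hF.bot hF.mono hF.continuous hFA (rkf η i) (rkf_lt i).le] at hmem
    choose g hg1 hg2 using fun (b : M) (hb : b ∈ B i) => mem_MU_finset R (hBi b hb)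
    refine ⟨⋃ b : B i, ((g b.1 b.2 : Finset η.ToType) : Set η.ToType), ?_, ?_, ?_⟩
    · refine lt_of_le_of_lt (Cardinal.mk_iUnion_le _) ?_
      refine Cardinal.mul_lt_of_lt hreg.aleph0_le (hBcard i) ?_
      refine lt_of_le_of_lt (ciSup_le' fun b => ?_) hunc
      exact ((g b.1 b.2).finite_toSet.lt_aleph0).le
    · intro j hj
      obtain ⟨b, hb⟩ := Set.mem_iUnion.1 hj
      exact rkf_lt_iff.1 (hg1 b.1 b.2 hb)
    · intro b hb
      refine MU_mono R ?_ (hg2 b hb)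
      exact Set.subset_iUnion
        (fun b : B i => ((g b.1 b.2 : Finset η.ToType) : Set η.ToType)) ⟨b, hb⟩
  choose Deps hDcard hDlt hDspan using hdeps
  have hDspan' : ∀ i, B i ⊆ (MU R A (Deps i) : Set M) := fun i b hb => hDspan i b hb
  -- Step 3: dependency closures
  let dIter : η.ToType → ℕ → Set η.ToType := fun i n =>
    Nat.rec {i} (fun _ d => d ∪ ⋃ j : d, Deps j.1) n
  have hdIter0 : ∀ i, dIter i 0 = {i} := fun _ => rfl
  have hdIterS : ∀ i n, dIter i (n + 1) = dIter i n ∪ ⋃ j : dIter i n, Deps j.1 :=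
    fun _ _ => rfl
  let dcl : η.ToType → Set η.ToType := fun i => ⋃ n : ULift.{v} ℕ, dIter i n.down
  have hdcl_self : ∀ i, i ∈ dcl i := fun i => Set.mem_iUnion.2 ⟨⟨0⟩, rfl⟩
  have hdcl_closed : ∀ i j, j ∈ dcl i → Deps j ⊆ dcl i := by
    intro i j hj k hk
    obtain ⟨n, hn⟩ := Set.mem_iUnion.1 hj
    refine Set.mem_iUnion.2 ⟨⟨n.down + 1⟩, ?_⟩
    rw [hdIterS]
    exact Or.inr (Set.mem_iUnion.2 ⟨⟨j, hn⟩, hk⟩)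
  have hdIter_card : ∀ i n, #↥(dIter i n) < μ := by
    intro i n
    induction n with
    | zero =>
      rw [hdIter0]
      exact lt_of_le_of_lt (by simp) hunc
    | succ n IHn =>
      rw [hdIterS]
      refine lt_of_le_of_lt (Cardinal.mk_union_le _ _) ?_
      refine Cardinal.add_lt_of_lt hreg.aleph0_le IHn ?_
      refine lt_of_le_of_lt (Cardinal.mk_iUnion_le _) ?_
      refine Cardinal.mul_lt_of_lt hreg.aleph0_le IHn ?_
      exact Cardinal.iSup_lt_of_isRegular hreg IHn fun j => hDcard j.1
  have hdcl_card : ∀ i, #↥(dcl i) < μ := by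
    intro i
    refine lt_of_le_of_lt (Cardinal.mk_iUnion_le _) ?_
    refine Cardinal.mul_lt_of_lt hreg.aleph0_le ?_ ?_
    · exact lt_of_le_of_lt (by simp) hunc
    · exact Cardinal.iSup_lt_of_isRegular hreg (lt_of_le_of_lt (by simp) hunc)
        fun n => hdIter_card i n.down
  have hdcl_subset : ∀ (T : Set η.ToType), (∀ i ∈ T, Deps i ⊆ T) →
      ∀ i ∈ T, dcl i ⊆ T := by
    intro T hT i hi
    have : ∀ n, dIter i n ⊆ T := by
      intro n
      induction n with
      | zero => rw [hdIter0]; simpa using hi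
      | succ n IHn =>
        rw [hdIterS]
        refine Set.union_subset IHn ?_
        exact Set.iUnion_subset fun j => hT j.1 (IHn j.2)
    exact Set.iUnion_subset fun n => this n.down
  -- Step 4: the closed set T of size ≤ μ generating everything
  have hgen_mem : ∀ g : sM, (g : M) ∈ MU R A {i | rkf η i < η} := by
    intro g
    rw [← F_eq_MU hF.bot hF.mono hF.continuous hFA η le_rfl, hF.top]
    trivial
  choose zg hzg1 hzg2 using fun g : sM => mem_MU_finset R (hgen_mem g)
  let zIter : ℕ → Set η.ToType := fun n =>
    Nat.rec (⋃ g : sM, ((zg g : Finset η.ToType) : Set η.ToType))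
      (fun _ z => z ∪ ⋃ j : z, Deps j.1) n
  have hzIterS : ∀ n, zIter (n + 1) = zIter n ∪ ⋃ j : zIter n, Deps j.1 := fun _ => rfl
  let T : Set η.ToType := ⋃ n : ULift.{v} ℕ, zIter n.down
  have hT_closed : ∀ i ∈ T, Deps i ⊆ T := by
    intro i hi k hk
    obtain ⟨n, hn⟩ := Set.mem_iUnion.1 hi
    refine Set.mem_iUnion.2 ⟨⟨n.down + 1⟩, ?_⟩
    rw [hzIterS]
    exact Or.inr (Set.mem_iUnion.2 ⟨⟨i, hn⟩, hk⟩)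
  have hzIter_card : ∀ n, #↥(zIter n) ≤ μ := by
    intro n
    induction n with
    | zero =>
      refine le_trans (Cardinal.mk_iUnion_le _) ?_
      calc #sM * ⨆ g : sM, #((zg g : Finset η.ToType) : Set η.ToType)
          ≤ μ * μ := mul_le_mul' hsMcard
            (le_trans (ciSup_le' fun g => ((zg g).finite_toSet.lt_aleph0).le) hunc.le)
        _ = μ := Cardinal.mul_eq_self hreg.aleph0_le
    | succ n IHn =>
      rw [hzIterS]
      refine le_trans (Cardinal.mk_union_le _ _) ?_
      have h2 : #↥(⋃ j : zIter n, Deps j.1) ≤ μ := by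
        refine le_trans (Cardinal.mk_iUnion_le _) ?_
        calc #↥(zIter n) * ⨆ j : zIter n, #(Deps j.1)
            ≤ μ * μ := mul_le_mul' IHn (ciSup_le' fun j => (hDcard j.1).le)
          _ = μ := Cardinal.mul_eq_self hreg.aleph0_le
      calc #↥(zIter n) + #↥(⋃ j : zIter n, Deps j.1) ≤ μ + μ := add_le_add IHn h2
        _ = μ := Cardinal.add_eq_self hreg.aleph0_le
  have hT_card : #↥T ≤ μ := by
    refine le_trans (Cardinal.mk_iUnion_le _) ?_
    calc #(ULift.{v} ℕ) * ⨆ n : ULift.{v} ℕ, #↥(zIter n.down)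
        ≤ μ * μ := mul_le_mul' (by simpa using hunc.le) (ciSup_le' fun n => hzIter_card n.down)
      _ = μ := Cardinal.mul_eq_self hreg.aleph0_le
  have hT_top : MU R A T = ⊤ := by
    refine le_antisymm le_top ?_
    rw [← hsMspan]
    refine Submodule.span_le.2 ?_
    intro g hg
    refine MU_mono R ?_ (hzg2 ⟨g, hg⟩)
    intro j hj
    exact Set.mem_iUnion.2 ⟨⟨0⟩, Set.mem_iUnion.2 ⟨⟨g, hg⟩, hj⟩⟩
  -- Step 5: embedding of T into μ.ord.ToType and the pick function
  have hTκ : #↥T ≤ #(μ.ord.ToType) := by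
    rw [Cardinal.mk_toType, Cardinal.card_ord]; exact hT_card
  obtain ⟨f⟩ := (Cardinal.le_def _ _).1 hTκ
  have hwfκ : WellFounded ((· < ·) : μ.ord.ToType → μ.ord.ToType → Prop) := wellFounded_lt
  have hwfo : WellFounded ((· < ·) : Ordinal.{v} → Ordinal.{v} → Prop) := wellFounded_lt
  have hpick : ∀ V : Set η.ToType, (T \ V).Nonempty → ∃ α : η.ToType,
      α ∈ T ∧ α ∉ V ∧ Deps α ⊆ V ∧
      ∀ γ : T, (γ : η.ToType) ∉ V → (∀ x : T, (x : η.ToType) ∉ V → f γ ≤ f x) →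
        α ∈ dcl (γ : η.ToType) := by
    intro V hne
    obtain ⟨x0v, hx0T, hx0V⟩ := hne
    have hSne : (f '' {x : T | (x : η.ToType) ∉ V}).Nonempty :=
      ⟨f ⟨x0v, hx0T⟩, ⟨x0v, hx0T⟩, hx0V, rfl⟩
    obtain ⟨x₀, hx₀V, hfx₀⟩ := hwfκ.min_mem _ hSne
    have hx₀min : ∀ x : T, (x : η.ToType) ∉ V → f x₀ ≤ f x := by
      intro x hx
      have hmem : f x ∈ f '' {x : T | (x : η.ToType) ∉ V} := ⟨x, hx, rfl⟩
      have := hwfκ.not_lt_min _ hmem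
      rw [← hfx₀] at this
      exact not_lt.1 this
    have hDne : (dcl (↑x₀) \ V).Nonempty := ⟨↑x₀, hdcl_self _, hx₀V⟩
    have hDSne : (rkf η '' (dcl (↑x₀) \ V)).Nonempty := hDne.image _
    obtain ⟨α, hαD, hrkα⟩ := hwfo.min_mem _ hDSne
    have hαmin : ∀ j ∈ dcl (↑x₀) \ V, ¬ rkf η j < rkf η α := by
      intro j hj h
      have hmem : rkf η j ∈ rkf η '' (dcl (↑x₀) \ V) := ⟨j, hj, rfl⟩
      exact hwfo.not_lt_min _ hmem (by rwa [hrkα] at h)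
    refine ⟨α, ?_, hαD.2, ?_, ?_⟩
    · exact hdcl_subset T hT_closed _ x₀.2 hαD.1
    · intro j hj
      have hjlt : rkf η j < rkf η α := rkf_lt_iff.2 (hDlt α j hj)
      have hjdcl : j ∈ dcl (↑x₀) := hdcl_closed _ _ hαD.1 hj
      by_contra hjV
      exact hαmin j ⟨hjdcl, hjV⟩ hjlt
    · intro γ hγV hγmin
      have h1 : f γ ≤ f x₀ := hγmin x₀ hx₀V
      have h2 : f x₀ ≤ f γ := hx₀min γ hγV
      have hγx₀ : γ = x₀ := f.injective (le_antisymm h1 h2)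
      rw [hγx₀]
      exact hαD.1
  -- Step 6: transfinite recursion
  let step : Set η.ToType → Set η.ToType := fun V =>
    if h : (T \ V).Nonempty then insert (hpick V h).choose V else V
  have hstep_pos : ∀ V (h : (T \ V).Nonempty), step V = insert (hpick V h).choose V := by
    intro V h; simp only [step, dif_pos h]
  have hstep_neg : ∀ V, ¬ (T \ V).Nonempty → step V = V := by
    intro V h; simp only [step, dif_neg h]
  have hstep_sub : ∀ V, V ⊆ step V := by
    intro V
    by_cases h : (T \ V).Nonempty
    · rw [hstep_pos V h]; exact Set.subset_insert _ _
    · rw [hstep_neg V h]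
  let U : Ordinal.{v} → Set η.ToType := iterU step
  have hUdef : ∀ ξ, U ξ = ⋃ ζ : Set.Iio ξ, step (U ζ.1) := fun ξ => iterU_def step ξ
  have hUmono : ∀ {ζ ξ : Ordinal.{v}}, ζ ≤ ξ → U ζ ⊆ U ξ := fun h => iterU_mono step h
  have hUsucc : ∀ ξ, U (ξ + 1) = step (U ξ) := iterU_succ step hstep_sub
  have hUT : ∀ ξ, U ξ ⊆ T := by
    intro ξ
    induction ξ using Ordinal.induction with
    | _ ξ IH =>
    rw [hUdef ξ]
    refine Set.iUnion_subset ?_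
    rintro ⟨ζ, hζ⟩
    by_cases h : (T \ U ζ).Nonempty
    · rw [hstep_pos _ h]
      exact Set.insert_subset ((hpick _ h).choose_spec.1) (IH ζ hζ)
    · rw [hstep_neg _ h]
      exact IH ζ hζ
  have hUdc : ∀ ξ : Ordinal.{v}, ∀ i ∈ U ξ, Deps i ⊆ U ξ := by
    intro ξ
    induction ξ using Ordinal.induction with
    | _ ξ IH =>
    intro i hi
    rw [hUdef ξ] at hi
    obtain ⟨⟨ζ, hζ⟩, hmem⟩ := Set.mem_iUnion.1 hi
    have hsub : step (U ζ) ⊆ U ξ := step_iterU_subset step hζ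
    by_cases h : (T \ U ζ).Nonempty
    · rw [hstep_pos _ h] at hmem
      rcases Set.mem_insert_iff.1 hmem with rfl | hUζ
      · exact ((hpick _ h).choose_spec.2.2.1).trans ((hstep_sub _).trans hsub)
      · exact (IH ζ hζ i hUζ).trans ((hstep_sub _).trans hsub)
    · rw [hstep_neg _ h] at hmem
      exact (IH ζ hζ i hmem).trans ((hstep_sub _).trans hsub)
  -- Step 7: coverage
  let tyin : μ.ord.ToType → Ordinal.{v} := fun k =>
    @Ordinal.typein μ.ord.ToType (· < ·) isWellOrder_lt k
  have htyin_lt : ∀ k, tyin k < μ.ord := by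
    intro k
    have := @Ordinal.typein_lt_type μ.ord.ToType (· < ·) isWellOrder_lt k
    rwa [Ordinal.type_toType] at this
  have hcov : ∀ x : T, ∃ ξ, ξ < μ.ord ∧ (x : η.ToType) ∈ U ξ := by
    have main : ∀ k : μ.ord.ToType, ∀ x : T, f x = k →
        ∃ ξ, ξ < μ.ord ∧ (x : η.ToType) ∈ U ξ := by
      intro k
      refine hwfκ.induction (C := fun k => ∀ x : T, f x = k →
        ∃ ξ, ξ < μ.ord ∧ (x : η.ToType) ∈ U ξ) k ?_
      clear k
      intro k IH γ hfγ
      have hpredcard : #{x : T // f x < k} < μ := by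
        have hinj : Function.Injective
            (fun x : {x : T // f x < k} => (⟨f x.1, x.2⟩ : Set.Iio k)) := by
          intro x y hxy
          have : f x.1 = f y.1 := congrArg Subtype.val hxy
          exact Subtype.ext (f.injective this)
        exact lt_of_le_of_lt (Cardinal.mk_le_of_injective hinj)
          (Cardinal.mk_Iio_ord_toType k)
      have hEx : ∀ x : {x : T // f x < k}, ∃ ξ, ξ < μ.ord ∧ (x.1 : η.ToType) ∈ U ξ :=
        fun x => IH (f x.1) x.2 x.1 rfl
      set E : {x : T // f x < k} → Ordinal.{v} :=
        fun x => sInf {ξ | (x.1 : η.ToType) ∈ U ξ} with hE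
      have hEmem : ∀ x, (x.1 : η.ToType) ∈ U (E x) := by
        intro x; obtain ⟨ξ, _, hmem⟩ := hEx x
        exact csInf_mem (s := {ξ : Ordinal.{v} | (x.1 : η.ToType) ∈ U ξ}) ⟨ξ, hmem⟩
      have hElt : ∀ x, E x < μ.ord := by
        intro x; obtain ⟨ξ, hξ, hmem⟩ := hEx x
        exact lt_of_le_of_lt
          (csInf_le' (show ξ ∈ {ξ : Ordinal.{v} | (x.1 : η.ToType) ∈ U ξ} from hmem)) hξ
      have hZ : (⨆ x : {x : T // f x < k}, E x) < μ.ord :=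
        Ordinal.iSup_lt_ord (by rw [hreg.cof_eq]; exact hpredcard) hElt
      set Z := ⨆ x : {x : T // f x < k}, E x with hZdef
      have hpredZ : ∀ x : {x : T // f x < k}, (x.1 : η.ToType) ∈ U Z := by
        intro x
        exact hUmono (le_ciSup (Ordinal.bddAbove_range E) x) (hEmem x)
      by_cases hγZ : (γ : η.ToType) ∈ U Z
      · exact ⟨Z, hZ, hγZ⟩
      by_contra hno
      push_neg at hno
      have hstage : ∀ k' : μ.ord.ToType, Z + tyin k' < μ.ord := by
        intro k'
        rw [Cardinal.lt_ord, Ordinal.card_add]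
        exact Cardinal.add_lt_of_lt hreg.aleph0_le
          (Cardinal.lt_ord.1 hZ) (Cardinal.lt_ord.1 (htyin_lt k'))
      have hne' : ∀ k' : μ.ord.ToType, (T \ U (Z + tyin k')).Nonempty :=
        fun k' => ⟨γ, γ.2, hno _ (hstage k')⟩
      have hpkmem : ∀ k', (hpick _ (hne' k')).choose ∈ dcl (γ : η.ToType) := by
        intro k'
        refine (hpick _ (hne' k')).choose_spec.2.2.2 γ (hno _ (hstage k')) ?_
        intro x hx
        by_contra hlt
        push_neg at hlt
        have hxpred : f x < k := by rw [← hfγ]; exact hlt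
        exact hx (hUmono le_self_add (hpredZ ⟨x, hxpred⟩))
      have hstep_lt : ∀ k₁ k₂ : μ.ord.ToType, k₁ < k₂ →
          (hpick _ (hne' k₁)).choose ≠ (hpick _ (hne' k₂)).choose := by
        intro k₁ k₂ hlt heq
        have h1 : (hpick _ (hne' k₁)).choose ∈ U (Z + tyin k₁ + 1) := by
          rw [hUsucc, hstep_pos _ (hne' k₁)]
          exact Set.mem_insert _ _
        have hle : Z + tyin k₁ + 1 ≤ Z + tyin k₂ := by
          rw [add_assoc]
          refine add_le_add_right ?_ Z
          rw [Ordinal.add_one_eq_succ, Order.succ_le_iff]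
          exact (@Ordinal.typein_lt_typein μ.ord.ToType (· < ·) isWellOrder_lt _ _).2 hlt
        have h2 := hUmono hle h1
        rw [heq] at h2
        exact (hpick _ (hne' k₂)).choose_spec.2.1 h2
      have hinj2 : Function.Injective fun k' : μ.ord.ToType =>
          (⟨(hpick _ (hne' k')).choose, hpkmem k'⟩ : dcl (γ : η.ToType)) := by
        intro k₁ k₂ h12
        have hval : (hpick _ (hne' k₁)).choose = (hpick _ (hne' k₂)).choose :=
          congrArg Subtype.val h12
        rcases lt_trichotomy k₁ k₂ with h | h | h
        · exact absurd hval (hstep_lt _ _ h)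
        · exact h
        · exact absurd hval.symm (hstep_lt _ _ h)
      have hcontra : #(μ.ord.ToType) ≤ #↥(dcl (γ : η.ToType)) :=
        Cardinal.mk_le_of_injective hinj2
      rw [Cardinal.mk_toType, Cardinal.card_ord] at hcontra
      exact absurd (lt_of_le_of_lt hcontra (hdcl_card _)) (lt_irrefl μ)
    exact fun x => main (f x) x rfl
  have hTU : T ⊆ U μ.ord := by
    intro x hx
    obtain ⟨ξ, hξ, hmem⟩ := hcov ⟨x, hx⟩
    exact hUmono hξ.le hmem
  have htopU : MU R A (U μ.ord) = ⊤ :=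
    le_antisymm le_top (by rw [← hT_top]; exact MU_mono R hTU)
  have hlamSne : {ξ : Ordinal.{v} | MU R A (U ξ) = ⊤}.Nonempty := ⟨μ.ord, htopU⟩
  set lam := sInf {ξ : Ordinal.{v} | MU R A (U ξ) = ⊤} with hlam
  have hlamle : lam ≤ μ.ord :=
    csInf_le' (show μ.ord ∈ {ξ : Ordinal.{v} | MU R A (U ξ) = ⊤} from htopU)
  have hlamtop : MU R A (U lam) = ⊤ := csInf_mem hlamSne
  have hltlam : ∀ i, i < lam → MU R A (U i) ≠ ⊤ := by
    intro i hi hcontra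
    exact absurd (csInf_le' (show i ∈ {ξ : Ordinal.{v} | MU R A (U ξ) = ⊤} from hcontra))
      (not_le.2 hi)
  -- Step 8: assemble
  refine ⟨lam, fun o => MU R A (U o), hlamle, ⟨?_, hlamtop, ?_, ?_, ?_⟩, ?_⟩
  · rw [show U 0 = ∅ from iterU_zero step, MU_empty]
  · intro i j hij _
    exact MU_mono R (hUmono hij)
  · intro i _ hlim
    apply le_antisymm
    · refine MU_le R ?_
      intro i' hi'
      rw [show U i = ⋃ ζ : Set.Iio i, U ζ.1 from iterU_limit step hlim] at hi'
      obtain ⟨⟨ζ, hζ⟩, hmem⟩ := Set.mem_iUnion.1 hi'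
      exact le_trans (span_le_MU R hmem)
        (le_iSup (fun j : {j : Ordinal.{v} // j < i} => MU R A (U j.1)) ⟨ζ, hζ⟩)
    · exact iSup_le fun j => MU_mono R (hUmono j.2.le)
  · -- quotients
    intro i hi1
    have hilt : i < lam := lt_of_lt_of_le
      (by rw [Ordinal.add_one_eq_succ]; exact Order.lt_succ i) hi1
    have hne : (T \ U i).Nonempty := by
      by_contra h
      rw [Set.not_nonempty_iff_eq_empty, Set.diff_eq_empty] at h
      exact hltlam i hilt (le_antisymm le_top (by rw [← hT_top]; exact MU_mono R h))
    have hspec := (hpick (U i) hne).choose_spec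
    set α := (hpick (U i) hne).choose with hα
    have hUsucci : U (i + 1) = insert α (U i) := by rw [hUsucc i, hstep_pos _ hne]
    obtain ⟨P, hPC, ⟨ψ⟩⟩ := hF.quot (rkf η α) (rkf_succ_le α)
    refine ⟨P, hPC, ⟨?_⟩⟩
    set q := Submodule.span R (A α) with hq
    have hqT : q ⊓ MU R A (U i) = q ⊓ F (rkf η α) := by
      apply le_antisymm
      · intro x hx
        obtain ⟨hxq, hxU⟩ := Submodule.mem_inf.1 hx
        have hxF1 : x ∈ F (rkf η α + 1) := spanA_le_F hFA α hxq
        have hx2 := key hF.bot hF.mono hF.continuous hFA hAB hDspan' hDlt (hUdc i)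
          (rkf η α + 1) (rkf_succ_le α) x hxU hxF1
        refine Submodule.mem_inf.2 ⟨hxq, ?_⟩
        refine MU_le R ?_ hx2
        rintro j ⟨hjU, hjlt⟩
        have hjle : rkf η j ≤ rkf η α := by
          have hj' : rkf η j < rkf η α + 1 := hjlt
          rwa [Ordinal.add_one_eq_succ, Order.lt_succ_iff] at hj'
        have hjne : rkf η j ≠ rkf η α := by
          intro heq
          exact hspec.2.1 ((rkf_inj heq) ▸ hjU)
        exact spanA_le_F_of_lt hF.mono hFA (lt_of_le_of_ne hjle hjne) (rkf_lt α).le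
      · intro x hx
        have hxB : x ∈ Submodule.span R (B α) := hAB α hx
        have h1 : Submodule.span R (B α) ≤ q := Submodule.span_le.2 (hBA α)
        have h2 : Submodule.span R (B α) ≤ MU R A (U i) := by
          refine Submodule.span_le.2 ?_
          intro b hb
          exact (MU_mono R hspec.2.2.1) (hDspan' α hb)
        exact Submodule.mem_inf.2 ⟨h1 hxB, h2 hxB⟩
    have e1 := subQuotEquiv R (MU R A (U i)) (MU R A (U (i + 1))) q
      (by rw [hUsucci, MU_insert])
    have e2 := subQuotEquiv R (F (rkf η α)) (F (rkf η α + 1)) q (hFA α)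
    have e3 : ((q : Submodule R M) ⧸ Submodule.comap q.subtype (q ⊓ MU R A (U i))) ≃ₗ[R]
        ((q : Submodule R M) ⧸ Submodule.comap q.subtype (q ⊓ F (rkf η α))) :=
      Submodule.quotEquivOfEq _ _ (by rw [hqT])
    exact (e1.symm.trans (e3.trans (e2.trans ψ)))
  · -- small generation of proper stages
    intro i hi
    have hiord : i < μ.ord := lt_of_lt_of_le hi hlamle
    have hUpick : ∀ ξ : Ordinal.{v}, ∀ j ∈ U ξ, ∃ ζ : Ordinal.{v}, ζ < ξ ∧
        ∃ h : (T \ U ζ).Nonempty, j = (hpick (U ζ) h).choose := by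
      intro ξ
      induction ξ using Ordinal.induction with
      | _ ξ IH =>
      intro j hj
      rw [hUdef ξ] at hj
      obtain ⟨⟨ζ, hζ⟩, hmem⟩ := Set.mem_iUnion.1 hj
      by_cases h : (T \ U ζ).Nonempty
      · rw [hstep_pos _ h] at hmem
        rcases Set.mem_insert_iff.1 hmem with rfl | hUζ
        · exact ⟨ζ, hζ, h, rfl⟩
        · obtain ⟨ζ', hζ', hh⟩ := IH ζ hζ j hUζ
          exact ⟨ζ', lt_trans hζ' hζ, hh⟩
      · rw [hstep_neg _ h] at hmem
        obtain ⟨ζ', hζ', hh⟩ := IH ζ hζ j hmem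
        exact ⟨ζ', lt_trans hζ' hζ, hh⟩
    refine ⟨⋃ j ∈ U i, A j, ?_, rfl⟩
    set AP : Ordinal.{v} → Set M := fun ζ =>
      if h : (T \ U ζ).Nonempty then A ((hpick (U ζ) h).choose) else ∅ with hAP
    have hcover : (⋃ j ∈ U i, A j) ⊆ ⋃ kk : i.ToType, AP (rkf i kk) := by
      intro x hx
      obtain ⟨j, hjU, hjx⟩ := Set.mem_iUnion₂.1 hx
      obtain ⟨ζ, hζ, h, rfl⟩ := hUpick i j hjU
      obtain ⟨kk, hkk⟩ := rkf_surj (η := i) hζ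
      refine Set.mem_iUnion.2 ⟨kk, ?_⟩
      rw [hkk]
      simp only [AP]
      rw [dif_pos h]
      exact hjx
    refine lt_of_le_of_lt (Cardinal.mk_le_mk_of_subset hcover) ?_
    refine lt_of_le_of_lt (Cardinal.mk_iUnion_le _) ?_
    refine Cardinal.mul_lt_of_lt hreg.aleph0_le ?_ ?_
    · rw [Cardinal.mk_toType]; exact Cardinal.lt_ord.1 hiord
    · refine Cardinal.iSup_lt_of_isRegular hreg ?_ ?_
      · rw [Cardinal.mk_toType]; exact Cardinal.lt_ord.1 hiord
      · intro kk
        by_cases h : (T \ U (rkf i kk)).Nonempty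
        · simp only [AP]; rw [dif_pos h]; exact hAcard _
        · simp only [AP]; rw [dif_neg h]
          simpa using (Cardinal.aleph0_pos.trans hunc)
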